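/- Let w(j) := α^{L_j − ν₀(j)} β^{ν₀(j)}, where L_j = ⌊log₂ j⌋ and ν₀(j) is the number of 0s in the binary expansion of j. (a) If β ≥ α > 0 and β ≥ 1, then β·w(n + 2^j) ≥ α·w(n) for all n ≥ 1 and j ≥ 0. (b) If α ≥ β > 0 and β ≤ 1, then β·w(n + 2^j) ≤ α·w(n) for all n ≥ 1 and j ≥ 0. -/
import Mathlib


/-- `ν₀(j)`, the number of 0s in the binary expansion of `j` (with `ν₀(0) = 0`). -/
def nuZero (j : ℕ) : ℕ := (Nat.digits 2 j).count 0

/-- `w(j) = α^{L_j − ν₀(j)} β^{ν₀(j)}`, where `L_j = ⌊log₂ j⌋`. -/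
def w (α β : ℝ) (j : ℕ) : ℝ := α ^ (Nat.log 2 j - nuZero j) * β ^ nuZero j

/-- number of 1s in binary expansion -/
def sOne (j : ℕ) : ℕ := (Nat.digits 2 j).count 1

lemma digits_two_mul {k : ℕ} (hk : 1 ≤ k) :
    Nat.digits 2 (2 * k) = 0 :: Nat.digits 2 k := by
  rw [Nat.digits_def' (by norm_num : 1 < 2) (by omega)]
  congr 1
  · omega
  · congr 1
    omega

lemma digits_two_mul_add_one (k : ℕ) :
    Nat.digits 2 (2 * k + 1) = 1 :: Nat.digits 2 k := by
  rw [Nat.digits_def' (by norm_num : 1 < 2) (by omega)]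
  congr 1
  · omega
  · congr 1
    omega

lemma sOne_zero : sOne 0 = 0 := by simp [sOne]

lemma nuZero_zero : nuZero 0 = 0 := by simp [nuZero]

lemma sOne_two_mul {k : ℕ} (hk : 1 ≤ k) : sOne (2 * k) = sOne k := by
  unfold sOne
  rw [digits_two_mul hk]
  simp [List.count_cons]

lemma sOne_two_mul_add_one (k : ℕ) : sOne (2 * k + 1) = sOne k + 1 := by
  unfold sOne
  rw [digits_two_mul_add_one]
  simp [List.count_cons]

lemma count_add_count {l : List ℕ} (h : ∀ x ∈ l, x < 2) :
    l.count 0 + l.count 1 = l.length := by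
  induction l with
  | nil => simp
  | cons a t ih =>
    have ha : a < 2 := h a (by simp)
    have ht : ∀ x ∈ t, x < 2 := fun x hx => h x (by simp [hx])
    have hih := ih ht
    simp only [List.count_cons, List.length_cons]
    interval_cases a <;> simp <;> omega

lemma nu_add_s {n : ℕ} (hn : 1 ≤ n) :
    nuZero n + sOne n = Nat.log 2 n + 1 := by
  have h := count_add_count (l := Nat.digits 2 n)
    (fun x hx => Nat.digits_lt_base (by norm_num) hx)
  rw [Nat.digits_len 2 n (by norm_num) (by omega)] at h
  exact h

lemma sOne_pos : ∀ n : ℕ, 1 ≤ n → 1 ≤ sOne n := by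
  intro n
  induction n using Nat.strong_induction_on with
  | _ n ih =>
    intro hn
    rcases Nat.even_or_odd n with ⟨k, hk⟩ | ⟨k, hk⟩
    · have hk' : n = 2 * k := by omega
      have hk1 : 1 ≤ k := by omega
      rw [hk', sOne_two_mul hk1]
      exact ih k (by omega) hk1
    · rw [hk, sOne_two_mul_add_one]
      omega

lemma sOne_succ_le : ∀ n : ℕ, sOne (n + 1) ≤ sOne n + 1 := by
  intro n
  induction n using Nat.strong_induction_on with
  | _ n ih =>
    rcases Nat.even_or_odd n with ⟨k, hk⟩ | ⟨k, hk⟩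
    · have hk' : n = 2 * k := by omega
      subst hk'
      rw [sOne_two_mul_add_one]
      rcases Nat.eq_zero_or_pos k with rfl | hk1
      · simp [sOne_zero]
      · rw [sOne_two_mul hk1]
    · have hk' : n = 2 * k + 1 := by omega
      subst hk'
      have hkn : k < 2 * k + 1 := by omega
      have h1 : 2 * k + 1 + 1 = 2 * (k + 1) := by ring
      rw [h1, sOne_two_mul (by omega), sOne_two_mul_add_one]
      have := ih k hkn
      omega

lemma sOne_add_pow : ∀ (j n : ℕ), sOne (n + 2 ^ j) ≤ sOne n + 1 := by
  intro j
  induction j with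
  | zero => intro n; simpa using sOne_succ_le n
  | succ j ih =>
    intro n
    rcases Nat.even_or_odd n with ⟨k, hk⟩ | ⟨k, hk⟩
    · have hk' : n = 2 * k := by omega
      subst hk'
      have h1 : 2 * k + 2 ^ (j + 1) = 2 * (k + 2 ^ j) := by ring
      rw [h1, sOne_two_mul (by have := Nat.one_le_two_pow (n := j); omega)]
      rcases Nat.eq_zero_or_pos k with rfl | hk1
      · simpa using ih 0
      · rw [sOne_two_mul hk1]
        exact ih k
    · subst hk
      have h1 : 2 * k + 1 + 2 ^ (j + 1) = 2 * (k + 2 ^ j) + 1 := by ring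
      rw [h1, sOne_two_mul_add_one, sOne_two_mul_add_one]
      have := ih k
      omega

lemma pow_ineq_a {α β : ℝ} (hα : 0 < α) (hαβ : α ≤ β) (hβ : 1 ≤ β)
    {a b c d : ℕ} (h1 : c ≤ a) (h2 : a + b ≤ c + d) :
    α ^ a * β ^ b ≤ α ^ c * β ^ d := by
  obtain ⟨e, rfl⟩ := Nat.exists_eq_add_of_le h1
  have hbe : e + b ≤ d := by omega
  have hβ0 : (0 : ℝ) < β := lt_of_lt_of_le hα hαβ
  calc α ^ (c + e) * β ^ b = α ^ c * (α ^ e * β ^ b) := by rw [pow_add]; ring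
    _ ≤ α ^ c * (β ^ e * β ^ b) :=
        mul_le_mul_of_nonneg_left
          (mul_le_mul_of_nonneg_right (pow_le_pow_left₀ hα.le hαβ e) (pow_pos hβ0 b).le)
          (pow_pos hα c).le
    _ = α ^ c * β ^ (e + b) := by rw [pow_add]
    _ ≤ α ^ c * β ^ d :=
        mul_le_mul_of_nonneg_left (pow_le_pow_right₀ hβ hbe) (pow_pos hα c).le

lemma pow_ineq_b {α β : ℝ} (hβ0 : 0 < β) (hβα : β ≤ α) (hβ : β ≤ 1)
    {a b c d : ℕ} (h1 : c ≤ a) (h2 : a + b ≤ c + d) :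
    α ^ c * β ^ d ≤ α ^ a * β ^ b := by
  obtain ⟨e, rfl⟩ := Nat.exists_eq_add_of_le h1
  have hbe : e + b ≤ d := by omega
  have hα0 : (0 : ℝ) < α := lt_of_lt_of_le hβ0 hβα
  calc α ^ c * β ^ d ≤ α ^ c * β ^ (e + b) :=
        mul_le_mul_of_nonneg_left (pow_le_pow_of_le_one hβ0.le hβ hbe) (pow_pos hα0 c).le
    _ = α ^ c * (β ^ e * β ^ b) := by rw [pow_add]
    _ ≤ α ^ c * (α ^ e * β ^ b) :=
        mul_le_mul_of_nonneg_left
          (mul_le_mul_of_nonneg_right (pow_le_pow_left₀ hβ0.le hβα e) (pow_pos hβ0 b).le)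
          (pow_pos hα0 c).le
    _ = α ^ (c + e) * β ^ b := by rw [pow_add]; ring

/-- (a) If `β ≥ α > 0` and `β ≥ 1`, then `β·w(n+2^j) ≥ α·w(n)` for all `n ≥ 1`, `j ≥ 0`.
(b) If `α ≥ β > 0` and `β ≤ 1`, then `β·w(n+2^j) ≤ α·w(n)` for all `n ≥ 1`, `j ≥ 0`. -/
theorem w_claim (α β : ℝ) :
    ((0 < α ∧ α ≤ β ∧ 1 ≤ β) →
      ∀ n : ℕ, 1 ≤ n → ∀ j : ℕ, α * w α β n ≤ β * w α β (n + 2 ^ j)) ∧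
    ((0 < β ∧ β ≤ α ∧ β ≤ 1) →
      ∀ n : ℕ, 1 ≤ n → ∀ j : ℕ, β * w α β (n + 2 ^ j) ≤ α * w α β n) := by
  have key : ∀ n : ℕ, 1 ≤ n → ∀ j : ℕ,
      (Nat.log 2 (n + 2 ^ j) - nuZero (n + 2 ^ j) ≤ Nat.log 2 n - nuZero n + 1) ∧
      (Nat.log 2 n - nuZero n + 1 + nuZero n ≤
        Nat.log 2 (n + 2 ^ j) - nuZero (n + 2 ^ j) + (nuZero (n + 2 ^ j) + 1)) := by
    intro n hn j
    have hm1 : 1 ≤ n + 2 ^ j := by have := Nat.one_le_two_pow (n := j); omega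
    have h1 := nu_add_s hn
    have h2 := nu_add_s hm1
    have h3 := sOne_add_pow j n
    have h4 := sOne_pos n hn
    have h5 := sOne_pos (n + 2 ^ j) hm1
    have h6 : Nat.log 2 n ≤ Nat.log 2 (n + 2 ^ j) := Nat.log_mono_right (Nat.le_add_right n (2 ^ j))
    omega
  constructor
  · rintro ⟨hα, hαβ, hβ⟩ n hn j
    obtain ⟨k1, k2⟩ := key n hn j
    have e1 : α * w α β n =
        α ^ (Nat.log 2 n - nuZero n + 1) * β ^ nuZero n := by
      rw [w, pow_succ]; ring
    have e2 : β * w α β (n + 2 ^ j) =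
        α ^ (Nat.log 2 (n + 2 ^ j) - nuZero (n + 2 ^ j)) *
          β ^ (nuZero (n + 2 ^ j) + 1) := by
      rw [w, pow_succ]; ring
    rw [e1, e2]
    exact pow_ineq_a hα hαβ hβ k1 k2
  · rintro ⟨hβ0, hβα, hβ⟩ n hn j
    obtain ⟨k1, k2⟩ := key n hn j
    have e1 : α * w α β n =
        α ^ (Nat.log 2 n - nuZero n + 1) * β ^ nuZero n := by
      rw [w, pow_succ]; ring
    have e2 : β * w α β (n + 2 ^ j) =
        α ^ (Nat.log 2 (n + 2 ^ j) - nuZero (n + 2 ^ j)) *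
          β ^ (nuZero (n + 2 ^ j) + 1) := by
      rw [w, pow_succ]; ring
    rw [e1, e2]
    exact pow_ineq_b hβ0 hβα hβ k1 k2
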